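/- Let X and Y be locally compact Hausdorff spaces and φ : X → Y a local homeomorphism onto its image. Let U be an open subset of X with compact closure such that φ restricted to the closure of U is a homeomorphism onto its image, and let f be a continuous function with compact support contained in U. Then there exists a continuous compactly supported function f' on Y such that f' ∘ φ = f on U and supp(f') ∩ φ(X) ⊆ φ(U). -/

import Mathlib

/-- Let `X`, `Y` be locally compact Hausdorff spaces and `φ : X → Y` a
continuous local homeomorphism onto its image. Let `U ⊆ X` be open with
compact closure, with `φ` restricted to `closure U` a homeomorphism onto its
image (in particular injective on `closure U`), and let `f` be continuous with
compact support contained in `U`. Then there is a continuous compactly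
supported `f'` on `Y` with `f' ∘ φ = f` on `U` and
`supp(f') ∩ φ(X) ⊆ φ(U)`. -/
theorem stmt_19 {X Y : Type*} [TopologicalSpace X] [LocallyCompactSpace X] [T2Space X]
    [TopologicalSpace Y] [LocallyCompactSpace Y] [T2Space Y]
    (φ : X → Y) (hc : Continuous φ)
    (hloc : IsLocalHomeomorph (Set.rangeFactorization φ))
    (U : Set X) (hU : IsOpen U) (hUc : IsCompact (closure U))
    (hinj : Set.InjOn φ (closure U))
    (f : X → ℝ) (hf : Continuous f) (hsupp : tsupport f ⊆ U) :
    ∃ f' : Y → ℝ, Continuous f' ∧ HasCompactSupport f' ∧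
      (∀ x ∈ U, f' (φ x) = f x) ∧
      tsupport f' ∩ Set.range φ ⊆ φ '' U := by
  classical
  -- `K` is the compact image of `closure U`.
  set K : Set Y := φ '' closure U with hK
  have hKc : IsCompact K := hUc.image hc
  -- an open set `V ⊆ Y` with `V ∩ range φ = φ '' U`
  have hopen : IsOpen (Set.rangeFactorization φ '' U) :=
    hloc.isOpenMap _ hU
  obtain ⟨V, hVopen, hVeq⟩ := isOpen_induced_iff.mp hopen
  have hVcap : V ∩ Set.range φ = φ '' U := by
    have : Subtype.val '' ((Subtype.val : Set.range φ → Y) ⁻¹' V)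
        = Subtype.val '' (Set.rangeFactorization φ '' U) := by rw [hVeq]
    rw [Subtype.image_preimage_coe] at this
    rw [Set.inter_comm] at this
    rw [this, Set.image_image]
    rfl
  have hφUV : φ '' U ⊆ V := by rw [← hVcap]; exact Set.inter_subset_left
  -- a compact set `L` with `K ⊆ interior L`
  obtain ⟨L, hLc, hKL⟩ := exists_compact_superset hKc
  have hKL' : K ⊆ L := hKL.trans interior_subset
  -- Urysohn function `χ`, equal to `1` on `φ '' tsupport f`, supported in `V ∩ interior L`
  have htsc : IsCompact (tsupport f) := hUc.of_isClosed_subset isClosed_closure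
    ((hsupp.trans subset_closure).trans subset_rfl)
  have himc : IsCompact (φ '' tsupport f) := htsc.image hc
  have hWopen : IsOpen (V ∩ interior L) := hVopen.inter isOpen_interior
  have himW : φ '' tsupport f ⊆ V ∩ interior L := by
    refine Set.subset_inter ?_ ?_
    · exact (Set.image_mono hsupp).trans hφUV
    · exact (Set.image_mono (hsupp.trans (subset_closure))).trans hKL
  obtain ⟨k, hkc, hkcl, hik, hkW⟩ :=
    exists_compact_closed_between himc hWopen himW
  obtain ⟨χ, hχ1, hχ0, hχc, hχ01⟩ :=
    exists_continuous_one_zero_of_isCompact himc isOpen_interior.isClosed_compl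
      (Set.disjoint_left.mpr (by intro a ha h; exact h (hik ha)))
  have hχsupp : tsupport χ ⊆ V ∩ interior L := by
    refine (closure_minimal ?_ hkcl).trans hkW
    intro y hy
    by_contra h
    exact hy (hχ0 (fun hi => h (interior_subset hi)))
  -- Tietze extension inside the compact (hence normal) space `L`
  haveI : CompactSpace (closure U) := isCompact_iff_compactSpace.mp hUc
  haveI : CompactSpace L := isCompact_iff_compactSpace.mp hLc
  let e : closure U → L := fun x => ⟨φ x, hKL' ⟨x.1, x.2, rfl⟩⟩
  have he_cont : Continuous e :=
    Continuous.subtype_mk (hc.comp continuous_subtype_val) _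
  have he_inj : Function.Injective e := by
    intro a b hab
    exact Subtype.ext (hinj a.2 b.2 (congrArg Subtype.val hab))
  have he := he_cont.isClosedEmbedding he_inj
  obtain ⟨G, hG⟩ := ContinuousMap.exists_extension' he
    ⟨fun x : closure U => f x, hf.comp continuous_subtype_val⟩
  -- the global function
  set H : Y → ℝ := fun y => if h : y ∈ L then G ⟨y, h⟩ else 0 with hHdef
  have hHL : ContinuousOn H L := by
    rw [continuousOn_iff_continuous_restrict]
    have : L.domRestrict H = fun y : L => G y := by
      funext y; simp [hHdef, y.2, Set.domRestrict_apply]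
    rw [this]
    exact G.continuous
  set f' : Y → ℝ := fun y => χ y * H y with hf'def
  have hsupp' : ∀ y, f' y ≠ 0 → y ∈ tsupport χ := by
    intro y hy
    apply subset_closure
    intro h0
    simp [hf'def, h0] at hy
  have hf'cont : Continuous f' := by
    rw [continuous_iff_continuousAt]
    intro y
    by_cases hy : y ∈ tsupport χ
    · have hyL : y ∈ interior L := (hχsupp hy).2
      have hHat : ContinuousAt H y :=
        (hHL.mono interior_subset).continuousAt (isOpen_interior.mem_nhds hyL)
      exact (χ.continuous.continuousAt).mul hHat
    · have : f' =ᶠ[nhds y] fun _ => 0 := by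
        filter_upwards [(isClosed_tsupport χ).isOpen_compl.mem_nhds hy] with z hz
        have : χ z = 0 := image_eq_zero_of_notMem_tsupport hz
        simp [hf'def, this]
      exact (continuousAt_const (y := (0:ℝ))).congr this.symm
  have hf'supp : HasCompactSupport f' := by
    apply HasCompactSupport.intro hLc
    intro y hy
    by_contra h
    exact hy (interior_subset (hχsupp (hsupp' y h)).2)
  refine ⟨f', hf'cont, hf'supp, ?_, ?_⟩
  · intro x hx
    have hxc : x ∈ closure U := subset_closure hx
    have hφxL : φ x ∈ L := hKL' ⟨x, hxc, rfl⟩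
    have hHx : H (φ x) = f x := by
      have := congrFun hG ⟨x, hxc⟩
      simpa [hHdef, hφxL, e] using this
    by_cases hfx : x ∈ tsupport f
    · have : χ (φ x) = 1 := hχ1 ⟨x, hfx, rfl⟩
      simp [hf'def, this, hHx]
    · have hfx0 : f x = 0 := image_eq_zero_of_notMem_tsupport hfx
      simp [hf'def, hHx, hfx0]
  · intro y ⟨hy1, hy2⟩
    have hyχ : y ∈ tsupport χ := by
      refine closure_minimal ?_ (isClosed_tsupport χ) hy1
      intro z hz
      exact hsupp' z hz
    have : y ∈ V := (hχsupp hyχ).1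
    rw [← hVcap]
    exact ⟨this, hy2⟩
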